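/- arXiv:math/0610590 — 2 statements merged into one kernel-verified Lean document; each statement's English description precedes it below -/
import Mathlib

section
/- Let X be a non-deterministic infinite exchangeable sequence of {0,1}-valued random variables. For every n ≥ 2, the set Ξ_n(X) of completely degenerate symmetric kernels of order n is the 1-dimensional vector space spanned by the symmetric kernel φ_n^(0) : {0,1}^n → ℝ defined by φ_n^(0)(0^(k)) = (−1)^k · P_n(0^(0)) / P_n(0^(k)) for k = 0,…,n, where φ_n^(0)(0^(k)) denotes the common value of φ_n^(0) on all vectors of {0,1}^n containing exactly k zeros. -/
open MeasureTheory

namespace HoeffdingUrn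

variable {Ω : Type} [MeasurableSpace Ω]

/-- `X` is an exchangeable sequence under `μ`: each `X i` is measurable and, for every `n`
and every permutation `π` of `{0,…,n-1}`, the law of `(X_{π 0},…,X_{π (n-1)})` coincides with
the law of `(X_0,…,X_{n-1})`. -/
def Exchangeable {D : Type} [MeasurableSpace D] (X : ℕ → Ω → D) (μ : Measure Ω) : Prop :=
  (∀ i, Measurable (X i)) ∧
  ∀ (n : ℕ) (π : Equiv.Perm (Fin n)),
    Measure.map (fun ω (i : Fin n) => X ((π i : Fin n) : ℕ) ω) μ =
      Measure.map (fun ω (i : Fin n) => X (i : ℕ) ω) μ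

/-- probability that the first `n` variables equal the vector `x`. -/
noncomputable def cylProb {D : Type} (X : ℕ → Ω → D) (μ : Measure Ω) {n : ℕ}
    (x : Fin n → D) : ℝ :=
  (μ {ω | ∀ i : Fin n, X (i : ℕ) ω = x i}).toReal

/-- `X` is non-deterministic: every finite configuration has positive probability. -/
def NonDeterministic {D : Type} (X : ℕ → Ω → D) (μ : Measure Ω) : Prop :=
  ∀ n : ℕ, 1 ≤ n → ∀ x : Fin n → D, 0 < cylProb X μ x

/-- the canonical vector of `{0,1}ⁿ` (with `false` = 0) containing exactly `j` zeros. -/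
def zeroVec (n j : ℕ) : Fin n → Bool := fun i => decide (j ≤ (i : ℕ))

/-- number of zeros (`false` entries) in a Boolean vector. -/
def zeroCountVec {n : ℕ} (x : Fin n → Bool) : ℕ :=
  (Finset.univ.filter fun i => x i = false).card

/-- `P_n(0^{(j)})`: the common probability of any configuration of `(X_1,…,X_n)` with
exactly `j` zeros. -/
noncomputable def Pz (X : ℕ → Ω → Bool) (μ : Measure Ω) (n j : ℕ) : ℝ :=
  cylProb X μ (zeroVec n j)

/-- number of zeros among the first `n` variables. -/
def zeroCount (X : ℕ → Ω → Bool) (n : ℕ) (ω : Ω) : ℕ :=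
  zeroCountVec (fun i : Fin n => X (i : ℕ) ω)

/-- `P^n_{n+v}(0^{(b)} ∣ 0^{(a)})`: conditional probability that `(X_1,…,X_{n+v})`
contains exactly `b` zeros given that `(X_1,…,X_n)` contains exactly `a` zeros. -/
noncomputable def condP (X : ℕ → Ω → Bool) (μ : Measure Ω) (n v b a : ℕ) : ℝ :=
  (μ {ω | zeroCount X (n + v) ω = b ∧ zeroCount X n ω = a}).toReal /
    (μ {ω | zeroCount X n ω = a}).toReal

/-- a symmetric function of `k` variables. -/
def SymmFun {D : Type} {k : ℕ} (φ : (Fin k → D) → ℝ) : Prop :=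
  ∀ (π : Equiv.Perm (Fin k)) (x : Fin k → D), φ (x ∘ π) = φ x

open Classical in
/-- the symmetric `U`-statistic with kernel `φ` of order `k`, based on `(X_1,…,X_n)`:
`F = ∑_{1 ≤ j₁ < … < j_k ≤ n} φ(X_{j₁},…,X_{j_k})`. -/
noncomputable def Ustat {D : Type} (X : ℕ → Ω → D) (n : ℕ) {k : ℕ}
    (φ : (Fin k → D) → ℝ) : Ω → ℝ :=
  fun ω => ∑ j : Fin k → Fin n, if StrictMono j then φ (fun i => X ((j i : Fin n) : ℕ) ω) else 0

/-- complete degeneracy of the kernel `φ` of order `k`: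
`E[φ(X_1,…,X_k) ∣ X_2,…,X_k] = 0` a.s. -/
def Degenerate {D : Type} [MeasurableSpace D] (X : ℕ → Ω → D) (μ : Measure Ω) {k : ℕ}
    (φ : (Fin k → D) → ℝ) : Prop :=
  μ[(fun ω => φ (fun i => X (i : ℕ) ω)) |
      MeasurableSpace.comap (fun ω (i : Fin (k - 1)) => X ((i : ℕ) + 1) ω) inferInstance]
    =ᵐ[μ] 0

/-- `X` is Hoeffding decomposable: for every `n ≥ 2` and `1 ≤ k ≤ n`, a symmetric
`U`-statistic of order `k` based on `(X_1,…,X_n)` is orthogonal to `SU_{k-1}(X_{[n]})`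
(equivalently, lies in `SH_k(X_{[n]})`) if and only if its kernel is completely degenerate. -/
def HoeffdingDecomposable {D : Type} [MeasurableSpace D] (X : ℕ → Ω → D) (μ : Measure Ω) :
    Prop :=
  ∀ n : ℕ, 2 ≤ n → ∀ k : ℕ, 1 ≤ k → k ≤ n → ∀ φ : (Fin k → D) → ℝ, SymmFun φ →
    ((∀ ψ : (Fin (k - 1) → D) → ℝ, SymmFun ψ →
        ∫ ω, Ustat X n φ ω * Ustat X n ψ ω ∂μ = 0) ↔ Degenerate X μ φ)

/-- the symmetric Hoeffding spaces `SH_k(X_{[n]})`, `n ≥ 2`, `1 ≤ k ≤ n`, are all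
non-trivial: each contains a `U`-statistic which is not a.s. zero. -/
def SHNontrivial {D : Type} (X : ℕ → Ω → D) (μ : Measure Ω) : Prop :=
  ∀ n : ℕ, 2 ≤ n → ∀ k : ℕ, 1 ≤ k → k ≤ n →
    ∃ φ : (Fin k → D) → ℝ, SymmFun φ ∧
      (∀ ψ : (Fin (k - 1) → D) → ℝ, SymmFun ψ →
        ∫ ω, Ustat X n φ ω * Ustat X n ψ ω ∂μ = 0) ∧
      ∫ ω, (Ustat X n φ ω) ^ 2 ∂μ ≠ 0

/-- canonical symmetrization of a function of `m` variables. -/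
noncomputable def symmetrize {D : Type} {m : ℕ} (f : (Fin m → D) → ℝ) : (Fin m → D) → ℝ :=
  fun x => (∑ π : Equiv.Perm (Fin m), f (x ∘ π)) / (Nat.factorial m : ℝ)

/-- the vector `(y_1,…,y_u,x_1,…,x_{n-u})` of length `n` (for `1 ≤ u ≤ n`). -/
noncomputable def headTail {D : Type} [Nonempty D] (u n : ℕ) (y : Fin u → D)
    (x : Fin (n - 1) → D) : Fin n → D :=
  fun i =>
    if h : (i : ℕ) < u then y ⟨i, h⟩
    else if h2 : (i : ℕ) - u < n - 1 then x ⟨(i : ℕ) - u, h2⟩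
    else Classical.arbitrary D

/-- `[T]^{(n-u)}_{n,n-1}`: the (version of the) conditional expectation
`E[T(X_1,…,X_n) ∣ X_{u+1},…,X_{u+n-1}]`, viewed as a function on `D^{n-1}`. -/
noncomputable def condProj {D : Type} [Fintype D] [Nonempty D] (X : ℕ → Ω → D)
    (μ : Measure Ω) (n u : ℕ) (T : (Fin n → D) → ℝ) : (Fin (n - 1) → D) → ℝ :=
  fun x =>
    (∑ y : Fin u → D, T (headTail u n y x) * cylProb X μ (Fin.append y x)) / cylProb X μ x

/-- `X` is weakly independent: for every `n ≥ 2`, every symmetric `T : D^n → ℝ` with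
`[T]^{(n-1)}_{n,n-1}(X_2,…,X_n) = 0` a.s. satisfies, for every `u = 2,…,n`,
`tilde-[T]^{(n-u)}_{n,n-1}(X_{u+1},…,X_{u+n-1}) = 0` a.s. -/
def WeaklyIndependent {D : Type} [Fintype D] [Nonempty D] (X : ℕ → Ω → D)
    (μ : Measure Ω) : Prop :=
  ∀ n : ℕ, 2 ≤ n → ∀ T : (Fin n → D) → ℝ, SymmFun T →
    (∀ᵐ ω ∂μ, condProj X μ n 1 T (fun i : Fin (n - 1) => X ((i : ℕ) + 1) ω) = 0) →
    ∀ u : ℕ, 2 ≤ u → u ≤ n →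
      ∀ᵐ ω ∂μ, symmetrize (condProj X μ n u T) (fun i : Fin (n - 1) => X (u + (i : ℕ)) ω) = 0

/-- `γ` is the de Finetti measure of the `{0,1}`-valued exchangeable sequence `X`. -/
def IsDeFinettiMeasure (X : ℕ → Ω → Bool) (μ : Measure Ω) (γ : Measure ℝ) : Prop :=
  IsProbabilityMeasure γ ∧ γ (Set.Icc (0 : ℝ) 1)ᶜ = 0 ∧
  ∀ (n : ℕ) (x : Fin n → Bool),
    cylProb X μ x =
      ∫ θ, θ ^ (Finset.univ.filter fun i => x i = true).card *
        (1 - θ) ^ (Finset.univ.filter fun i => x i = false).card ∂γ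

/-- the `n`-th moment of a measure on `[0,1] ⊆ ℝ`. -/
noncomputable def momentOf (γ : Measure ℝ) (n : ℕ) : ℝ := ∫ θ, θ ^ n ∂γ

/-- the Beta(a,b) distribution on `[0,1]`, with density `θ^{a-1}(1-θ)^{b-1}/B(a,b)`. -/
noncomputable def betaMeasure (a b : ℝ) : Measure ℝ :=
  (volume.restrict (Set.Ioo (0 : ℝ) 1)).withDensity fun θ =>
    ENNReal.ofReal (θ ^ (a - 1) * (1 - θ) ^ (b - 1) /
      ∫ t in Set.Ioo (0 : ℝ) 1, t ^ (a - 1) * (1 - t) ^ (b - 1))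

/-- the canonical completely degenerate kernel `φ_n^{(0)}` of order `n`:
`φ_n^{(0)}(0^{(k)}) = (-1)^k P_n(0^{(0)}) / P_n(0^{(k)})`. -/
noncomputable def phi0 (X : ℕ → Ω → Bool) (μ : Measure Ω) (n : ℕ) :
    (Fin n → Bool) → ℝ :=
  fun x => (-1 : ℝ) ^ zeroCountVec x * (Pz X μ n 0 / Pz X μ n (zeroCountVec x))

/-- `f` is separately symmetric in its first `v` and last `m - v` variables. -/
def SepSymm {m : ℕ} (v : ℕ) (f : (Fin m → Bool) → ℝ) : Prop :=
  ∀ π : Equiv.Perm (Fin m), (∀ i : Fin m, (i : ℕ) < v ↔ ((π i : Fin m) : ℕ) < v) →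
    ∀ x : Fin m → Bool, f (x ∘ π) = f x

/-- the canonical vector of `{0,1}^m` whose first `v` coordinates contain exactly `k`
zeros and whose last `m - v` coordinates contain exactly `l` zeros. -/
def blockVec (m v k l : ℕ) : Fin m → Bool :=
  fun i => if (i : ℕ) < v then decide (k ≤ (i : ℕ)) else decide (l ≤ (i : ℕ) - v)

/-- `X` is an urn process in the sense of Hill, Lane and Sudderth: there are a measurable
`f : [0,1] → [0,1]` and positive integers `r`, `b` with
`P(X_{n+1} = 1 ∣ X_1,…,X_n) = f((r + X_1 + … + X_n)/(r + b + n))` a.s. for every `n ≥ 1`. -/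
def IsUrnProcess (X : ℕ → Ω → Bool) (μ : Measure Ω) : Prop :=
  ∃ (f : ℝ → ℝ) (r b : ℕ), Measurable f ∧
    Set.MapsTo f (Set.Icc (0 : ℝ) 1) (Set.Icc (0 : ℝ) 1) ∧ 0 < r ∧ 0 < b ∧
    ∀ n : ℕ, 1 ≤ n →
      (μ[(fun ω => if X n ω = true then (1 : ℝ) else 0) |
          MeasurableSpace.comap (fun ω (i : Fin n) => X (i : ℕ) ω) inferInstance]
        =ᵐ[μ] fun ω =>
          f (((r : ℝ) + ∑ i : Fin n, (if X (i : ℕ) ω = true then (1 : ℝ) else 0)) /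
            ((r : ℝ) + (b : ℝ) + (n : ℝ))))

section Aux

lemma zeroCountVec_comp_perm {n : ℕ} (x : Fin n → Bool) (π : Equiv.Perm (Fin n)) :
    zeroCountVec (x ∘ π) = zeroCountVec x := by
  unfold zeroCountVec
  apply Finset.card_bij (fun i _ => π i)
  · intro a ha
    simp only [Finset.mem_filter, Finset.mem_univ, true_and, Function.comp_apply] at ha ⊢
    exact ha
  · intro a _ b _ h
    exact π.injective h
  · intro b hb
    simp only [Finset.mem_filter, Finset.mem_univ, true_and] at hb
    exact ⟨π.symm b, by simpa using hb, by simp⟩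

lemma exists_perm_comp_eq {n : ℕ} (x x' : Fin n → Bool)
    (h : zeroCountVec x = zeroCountVec x') : ∃ π : Equiv.Perm (Fin n), x ∘ π = x' := by
  classical
  have h0 : Fintype.card {i // x i = false} = Fintype.card {i // x' i = false} := by
    simpa [Fintype.card_subtype, zeroCountVec] using h
  have h1 : Fintype.card {i // ¬ x i = false} = Fintype.card {i // ¬ x' i = false} := by
    rw [Fintype.card_subtype_compl, Fintype.card_subtype_compl, h0]
  let e0 := Fintype.equivOfCardEq h0
  let e1 := Fintype.equivOfCardEq h1
  refine ⟨(Equiv.sumCompl (fun i => x' i = false)).symm.trans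
      ((Equiv.sumCongr e0.symm e1.symm).trans (Equiv.sumCompl (fun i => x i = false))), ?_⟩
  funext i
  simp only [Function.comp_apply, Equiv.trans_apply]
  by_cases hi : x' i = false
  · rw [Equiv.sumCompl_symm_apply_of_pos (p := fun i => x' i = false) hi]
    simp only [Equiv.sumCongr_apply, Sum.map_inl, Equiv.sumCompl_apply_inl]
    rw [(e0.symm ⟨i, hi⟩).2, hi]
  · rw [Equiv.sumCompl_symm_apply_of_neg (p := fun i => x' i = false) hi]
    simp only [Equiv.sumCongr_apply, Sum.map_inr, Equiv.sumCompl_apply_inr]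
    have h2 := (e1.symm ⟨i, hi⟩).2
    rw [Bool.not_eq_false] at h2 hi
    rw [h2, hi]

lemma zeroCountVec_le {n : ℕ} (x : Fin n → Bool) : zeroCountVec x ≤ n := by
  classical
  calc zeroCountVec x ≤ (Finset.univ : Finset (Fin n)).card := Finset.card_filter_le _ _
  _ = n := by simp

lemma zeroCountVec_zeroVec {n j : ℕ} (h : j ≤ n) : zeroCountVec (zeroVec n j) = j := by
  classical
  have h1 : zeroCountVec (zeroVec n j) = Fintype.card {i : Fin n // (i : ℕ) < j} := by
    rw [Fintype.card_subtype]
    unfold zeroCountVec zeroVec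
    congr 1
    apply Finset.filter_congr
    intro i _
    simp
  have e : {i : Fin n // (i : ℕ) < j} ≃ Fin j :=
    { toFun := fun i => ⟨(i.1 : ℕ), i.2⟩
      invFun := fun k => ⟨⟨(k : ℕ), lt_of_lt_of_le k.isLt h⟩, k.isLt⟩
      left_inv := fun i => rfl
      right_inv := fun k => rfl }
  rw [h1, Fintype.card_congr e, Fintype.card_fin]

lemma zeroCountVec_cons {m : ℕ} (b : Bool) (y : Fin m → Bool) :
    zeroCountVec (Fin.cons b y) = (if b = false then 1 else 0) + zeroCountVec y := by
  classical
  unfold zeroCountVec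
  rw [Finset.card_filter, Finset.card_filter, Fin.sum_univ_succ]
  simp

lemma cylProb_comp_perm (X : ℕ → Ω → Bool) (μ : Measure Ω) (hexch : Exchangeable X μ)
    {n : ℕ} (π : Equiv.Perm (Fin n)) (x : Fin n → Bool) :
    cylProb X μ (x ∘ π) = cylProb X μ x := by
  have h := hexch.2 n π.symm
  have hmeas : MeasurableSet ({x} : Set (Fin n → Bool)) := measurableSet_singleton x
  have h1 : Measurable (fun ω (i : Fin n) => X ((π.symm i : Fin n) : ℕ) ω) :=
    measurable_pi_lambda _ fun i => hexch.1 _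
  have h2 : Measurable (fun ω (i : Fin n) => X ((i : Fin n) : ℕ) ω) :=
    measurable_pi_lambda _ fun i => hexch.1 _
  have key := congrArg (fun ν : Measure (Fin n → Bool) => ν ({x} : Set (Fin n → Bool))) h
  simp only [Measure.map_apply h1 hmeas, Measure.map_apply h2 hmeas] at key
  have e1 : (fun ω (i : Fin n) => X ((π.symm i : Fin n) : ℕ) ω) ⁻¹' {x} =
      {ω | ∀ i : Fin n, X (i : ℕ) ω = (x ∘ π) i} := by
    ext ω
    simp only [Set.mem_preimage, Set.mem_singleton_iff, funext_iff, Set.mem_setOf_eq,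
      Function.comp_apply]
    constructor
    · intro hh i
      simpa using hh (π i)
    · intro hh i
      simpa using hh (π.symm i)
  have e2 : (fun ω (i : Fin n) => X ((i : Fin n) : ℕ) ω) ⁻¹' {x} =
      {ω | ∀ i : Fin n, X (i : ℕ) ω = x i} := by
    ext ω
    simp [funext_iff]
  rw [e1, e2] at key
  unfold cylProb
  rw [key]

lemma cylProb_eq_Pz (X : ℕ → Ω → Bool) (μ : Measure Ω) (hexch : Exchangeable X μ)
    {n : ℕ} (x : Fin n → Bool) :
    cylProb X μ x = Pz X μ n (zeroCountVec x) := by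
  obtain ⟨π, hπ⟩ := exists_perm_comp_eq (zeroVec n (zeroCountVec x)) x
    (by rw [zeroCountVec_zeroVec (zeroCountVec_le x)])
  have hp := cylProb_comp_perm X μ hexch π (zeroVec n (zeroCountVec x))
  rw [hπ] at hp
  rw [Pz, ← hp]

lemma symmFun_eq_zeroVec {n : ℕ} {φ : (Fin n → Bool) → ℝ} (hφ : SymmFun φ)
    (x : Fin n → Bool) : φ x = φ (zeroVec n (zeroCountVec x)) := by
  obtain ⟨π, hπ⟩ := exists_perm_comp_eq (zeroVec n (zeroCountVec x)) x
    (by rw [zeroCountVec_zeroVec (zeroCountVec_le x)])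
  have hp := hφ π (zeroVec n (zeroCountVec x))
  rw [hπ] at hp
  exact hp

lemma condexp_comap_eq_zero_iff {E : Type} [Fintype E] [MeasurableSpace E]
    [MeasurableSingletonClass E]
    (μ : Measure Ω) [IsProbabilityMeasure μ] (Y : Ω → E) (hY : Measurable Y)
    (f : Ω → ℝ) (hf : Integrable f μ) :
    (μ[f | MeasurableSpace.comap Y inferInstance] =ᵐ[μ] 0) ↔
      ∀ e : E, ∫ ω in Y ⁻¹' {e}, f ω ∂μ = 0 := by
  classical
  have hm : MeasurableSpace.comap Y inferInstance ≤ ‹MeasurableSpace Ω› := hY.comap_le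
  constructor
  · intro h e
    have hs : MeasurableSet[MeasurableSpace.comap Y inferInstance] (Y ⁻¹' {e}) :=
      ⟨{e}, measurableSet_singleton e, rfl⟩
    rw [← setIntegral_condExp hm hf hs, integral_congr_ae (ae_restrict_of_ae h)]
    simp
  · intro h
    have key : (fun _ : Ω => (0 : ℝ)) =ᵐ[μ] μ[f | MeasurableSpace.comap Y inferInstance] := by
      refine ae_eq_condExp_of_forall_setIntegral_eq hm hf ?_ ?_ ?_
      · intro s _ _
        exact (integrable_zero _ _ _).integrableOn
      · intro s hs _
        obtain ⟨A, -, rfl⟩ := hs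
        have hsplit : Y ⁻¹' A = ⋃ e ∈ A.toFinite.toFinset, Y ⁻¹' {e} := by
          ext ω
          constructor
          · intro ha
            exact Set.mem_biUnion ((A.toFinite.mem_toFinset).mpr ha) rfl
          · intro ha
            obtain ⟨e, he, hh⟩ := Set.mem_iUnion₂.mp ha
            simp only [Set.mem_preimage, Set.mem_singleton_iff] at hh
            show Y ω ∈ A
            rw [hh]
            exact (A.toFinite.mem_toFinset).mp he
        have hsum : ∫ ω in Y ⁻¹' A, f ω ∂μ = 0 := by
          rw [hsplit, integral_biUnion_finset _ (fun e _ => hY (measurableSet_singleton e))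
            (fun a _ b _ hab => (Set.disjoint_singleton.mpr hab).preimage Y)
            (fun e _ => hf.integrableOn)]
          exact Finset.sum_eq_zero fun e _ => h e
        rw [hsum]
        simp
      · exact StronglyMeasurable.aestronglyMeasurable stronglyMeasurable_const
    exact key.symm
  
end Aux

/-- Lemma 1. For a non-deterministic infinite exchangeable sequence of
`{0,1}`-valued random variables and `n ≥ 2`, the set `Ξ_n(X)` of completely degenerate
symmetric kernels of order `n` is the one-dimensional vector space spanned by the kernel
`φ_n^{(0)}` with `φ_n^{(0)}(0^{(k)}) = (-1)^k P_n(0^{(0)})/P_n(0^{(k)})`. -/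
theorem xi_n_eq_span_phi0
    {Ω : Type} [MeasurableSpace Ω] (μ : Measure Ω) [IsProbabilityMeasure μ]
    (X : ℕ → Ω → Bool) (hexch : Exchangeable X μ) (hnd : NonDeterministic X μ)
    (n : ℕ) (hn : 2 ≤ n) (φ : (Fin n → Bool) → ℝ) :
    (SymmFun φ ∧ Degenerate X μ φ) ↔ ∃ c : ℝ, φ = fun x => c * phi0 X μ n x := by
  classical
  obtain ⟨m, rfl⟩ : ∃ m, n = m + 1 := ⟨n - 1, by omega⟩
  set Z : Ω → (Fin (m + 1) → Bool) := fun ω (i : Fin (m + 1)) => X (i : ℕ) ω with hZdef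
  set Y : Ω → (Fin m → Bool) := fun ω (i : Fin m) => X ((i : ℕ) + 1) ω with hYdef
  have hZ : Measurable Z := measurable_pi_lambda _ fun i => hexch.1 _
  have hY : Measurable Y := measurable_pi_lambda _ fun i => hexch.1 _
  have hP : ∀ k, 0 < Pz X μ (m + 1) k := fun k => hnd (m + 1) (by omega) (zeroVec (m + 1) k)
  have hfiber : ∀ (ψ : (Fin (m + 1) → Bool) → ℝ) (v : Fin (m + 1) → Bool),
      ∫ ω in Z ⁻¹' {v}, ψ (Z ω) ∂μ = ψ v * Pz X μ (m + 1) (zeroCountVec v) := by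
    intro ψ v
    rw [setIntegral_congr_fun (hZ (measurableSet_singleton v))
      (fun ω hω => by rw [show Z ω = v from hω]), setIntegral_const, smul_eq_mul, mul_comm]
    congr 1
    rw [← cylProb_eq_Pz X μ hexch v]
    unfold cylProb
    have hset : Z ⁻¹' {v} = {ω | ∀ i : Fin (m + 1), X (i : ℕ) ω = v i} := by
      ext ω
      simp [hZdef, funext_iff]
    rw [hset]
    rfl
  have hdeg_iff : ∀ ψ : (Fin (m + 1) → Bool) → ℝ, Degenerate X μ ψ ↔ ∀ y : Fin m → Bool,
      ψ (Fin.cons false y) * Pz X μ (m + 1) (1 + zeroCountVec y)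
        + ψ (Fin.cons true y) * Pz X μ (m + 1) (zeroCountVec y) = 0 := by
    intro ψ
    have hfm : Measurable (fun ω => ψ (Z ω)) := (measurable_of_countable ψ).comp hZ
    have hfi : Integrable (fun ω => ψ (Z ω)) μ := by
      refine Integrable.mono' (integrable_const (∑ v : Fin (m + 1) → Bool, ‖ψ v‖))
        hfm.aestronglyMeasurable (ae_of_all _ fun ω => ?_)
      exact Finset.single_le_sum (f := fun v => ‖ψ v‖) (fun v _ => norm_nonneg _)
        (Finset.mem_univ (Z ω))
    have hchar := condexp_comap_eq_zero_iff μ Y hY (fun ω => ψ (Z ω)) hfi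
    have hdeg : Degenerate X μ ψ ↔ ∀ e : Fin m → Bool, ∫ ω in Y ⁻¹' {e}, ψ (Z ω) ∂μ = 0 :=
      hchar
    rw [hdeg]
    apply forall_congr'
    intro y
    have hne : (Fin.cons false y : Fin (m + 1) → Bool) ≠ Fin.cons true y := by
      intro hcc
      have := congrFun hcc 0
      simp at this
    have hsp : Y ⁻¹' {y} = Z ⁻¹' {Fin.cons false y} ∪ Z ⁻¹' {Fin.cons true y} := by
      ext ω
      simp only [Set.mem_preimage, Set.mem_singleton_iff, Set.mem_union, funext_iff,
        Fin.forall_fin_succ, Fin.cons_zero, Fin.cons_succ, Fin.val_succ, Fin.val_zero,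
        hYdef, hZdef]
      constructor
      · intro hh
        rcases Bool.dichotomy (X 0 ω) with h0 | h0
        · exact Or.inl ⟨h0, hh⟩
        · exact Or.inr ⟨h0, hh⟩
      · rintro (⟨-, hh⟩ | ⟨-, hh⟩) <;> exact hh
    rw [hsp, setIntegral_union ((Set.disjoint_singleton.mpr hne).preimage Z)
      (hZ (measurableSet_singleton _)) hfi.integrableOn hfi.integrableOn,
      hfiber, hfiber, zeroCountVec_cons, zeroCountVec_cons]
    simp
  constructor
  · rintro ⟨hsym, hdeg⟩
    rw [hdeg_iff φ] at hdeg
    have hrec : ∀ k, k ≤ m → φ (zeroVec (m + 1) (k + 1)) * Pz X μ (m + 1) (k + 1)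
        + φ (zeroVec (m + 1) k) * Pz X μ (m + 1) k = 0 := by
      intro k hk
      have h1 := hdeg (zeroVec m k)
      rw [zeroCountVec_zeroVec hk] at h1
      have e1 : φ (Fin.cons false (zeroVec m k)) = φ (zeroVec (m + 1) (k + 1)) := by
        rw [symmFun_eq_zeroVec hsym (Fin.cons false (zeroVec m k)), zeroCountVec_cons,
          zeroCountVec_zeroVec hk]
        norm_num [Nat.add_comm]
      have e2 : φ (Fin.cons true (zeroVec m k)) = φ (zeroVec (m + 1) k) := by
        rw [symmFun_eq_zeroVec hsym (Fin.cons true (zeroVec m k)), zeroCountVec_cons,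
          zeroCountVec_zeroVec hk]
        norm_num
      rw [e1, e2, show 1 + k = k + 1 by omega] at h1
      exact h1
    have hval : ∀ k, k ≤ m + 1 → φ (zeroVec (m + 1) k)
        = (-1) ^ k * (Pz X μ (m + 1) 0 / Pz X μ (m + 1) k) * φ (zeroVec (m + 1) 0) := by
      intro k
      induction k with
      | zero => intro _; simp [div_self (hP 0).ne']
      | succ k ih =>
        intro hk
        have h1 := hrec k (by omega)
        have h2 := ih (by omega)
        have hcancel : (-1 : ℝ) ^ k * (Pz X μ (m + 1) 0 / Pz X μ (m + 1) k)
            * φ (zeroVec (m + 1) 0) * Pz X μ (m + 1) k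
            = (-1) ^ k * Pz X μ (m + 1) 0 * φ (zeroVec (m + 1) 0) := by
          field_simp [(hP k).ne']
        rw [h2, hcancel] at h1
        have h3 : φ (zeroVec (m + 1) (k + 1))
            = ((-1) ^ (k + 1) * Pz X μ (m + 1) 0 * φ (zeroVec (m + 1) 0))
              / Pz X μ (m + 1) (k + 1) := by
          rw [eq_div_iff (hP (k + 1)).ne', pow_succ]
          linarith
        rw [h3]
        ring
    refine ⟨φ (zeroVec (m + 1) 0), funext fun x => ?_⟩
    rw [symmFun_eq_zeroVec hsym x, hval _ (zeroCountVec_le x)]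
    unfold phi0 Pz
    ring
  · rintro ⟨c, rfl⟩
    have hsym : SymmFun (fun x => c * phi0 X μ (m + 1) x) := by
      intro π x
      simp only [phi0]
      rw [zeroCountVec_comp_perm]
    refine ⟨hsym, ?_⟩
    rw [hdeg_iff]
    intro y
    simp only [phi0]
    rw [zeroCountVec_cons, zeroCountVec_cons]
    have h0 := (hP (1 + zeroCountVec y)).ne'
    have h1 := (hP (zeroCountVec y)).ne'
    norm_num
    field_simp [h0, h1]
    ring

end HoeffdingUrn
end

section
/- Let X be a non-deterministic infinite exchangeable sequence of {0,1}-valued random variables and fix n ≥ 2. Then the following two conditions are equivalent: (i) for every z = 0,…,n−1, Σ_{k = max(0, z−1)}^{min(z, n−2)} (−1)^k C(n−2, k) Σ_{m=0}^{2} (−1)^m C(2, m) P^n_{n+1}(0^(m+z) | 0^(m+k)) = 0; (ii) for every p = 0,…,n−2, P^n_{n+1}(0^(p+2) | 0^(p+2)) − 2·P^n_{n+1}(0^(p+1) | 0^(p+1)) + P^n_{n+1}(0^(p) | 0^(p)) = 0. -/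
open MeasureTheory

namespace HoeffdingUrn

variable {Ω : Type} [MeasurableSpace Ω]

set_option linter.unusedSectionVars false

section Helpers

variable (X : ℕ → Ω → Bool) (μ : Measure Ω)

lemma zeroCount_succ (n : ℕ) (ω : Ω) :
    zeroCount X (n + 1) ω = zeroCount X n ω + (if X n ω = false then 1 else 0) := by
  unfold zeroCount zeroCountVec
  rw [Finset.card_filter, Finset.card_filter, Fin.sum_univ_castSucc]
  simp

lemma zeroCount_measurable (hX : ∀ i, Measurable (X i)) (n : ℕ) :
    Measurable (zeroCount X n) := by
  have h : zeroCount X n = fun ω => ∑ i : Fin n, if X (i : ℕ) ω = false then 1 else 0 := by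
    funext ω; unfold zeroCount zeroCountVec; rw [Finset.card_filter]
  rw [h]
  exact Finset.measurable_sum _ fun i _ =>
    Measurable.ite ((hX i) (MeasurableSet.singleton false)) measurable_const measurable_const

lemma count_measure_ne_zero (hnd : NonDeterministic X μ) {n a : ℕ} (hn : 1 ≤ n) (ha : a ≤ n) :
    μ {ω | zeroCount X n ω = a} ≠ 0 := by
  have hcard : zeroCountVec (zeroVec n a) = a := by
    unfold zeroCountVec zeroVec
    rw [Finset.card_filter, Fin.sum_univ_eq_sum_range (fun i => if decide (a ≤ i) = false then 1 else 0)]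
    have h1 : ∀ i, (if decide (a ≤ i) = false then (1:ℕ) else 0) = if i < a then 1 else 0 := by
      intro i; by_cases h : i < a <;> simp [h, Nat.not_le.2, Nat.le_of_not_lt]
    simp only [h1]
    rw [← Finset.card_filter]
    have h2 : Finset.filter (fun i => i < a) (Finset.range n) = Finset.range a := by
      ext i; simp; omega
    simp [h2]
  have hsub : {ω | ∀ i : Fin n, X (i : ℕ) ω = zeroVec n a i} ⊆ {ω | zeroCount X n ω = a} := by
    intro ω hω
    have hfe : (fun i : Fin n => X (i : ℕ) ω) = zeroVec n a := funext hω
    show zeroCount X n ω = a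
    rw [zeroCount, hfe, hcard]
  have hpos := hnd n hn (zeroVec n a)
  intro h0
  have hz : μ {ω | ∀ i : Fin n, X (i : ℕ) ω = zeroVec n a i} = 0 :=
    le_antisymm (h0 ▸ measure_mono hsub) zero_le
  rw [cylProb, hz] at hpos; simp at hpos

lemma condP_diag_add [IsProbabilityMeasure μ] (hX : ∀ i, Measurable (X i))
    (hnd : NonDeterministic X μ) {n a : ℕ} (hn : 1 ≤ n) (ha : a ≤ n) :
    condP X μ n 1 a a + condP X μ n 1 (a + 1) a = 1 := by
  set D := {ω | zeroCount X n ω = a} with hD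
  set S0 := {ω | zeroCount X (n + 1) ω = a ∧ zeroCount X n ω = a} with hS0
  set S1 := {ω | zeroCount X (n + 1) ω = a + 1 ∧ zeroCount X n ω = a} with hS1
  have hunion : S0 ∪ S1 = D := by
    ext ω
    simp only [hS0, hS1, hD, Set.mem_union, Set.mem_setOf_eq]
    constructor
    · rintro (⟨_, h⟩ | ⟨_, h⟩) <;> exact h
    · intro h
      have hstep := zeroCount_succ X n ω
      by_cases hb : X n ω = false
      · right; constructor; · rw [hstep, h]; simp [hb]
        exact h
      · left; constructor; · rw [hstep, h]; simp [hb]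
        exact h
  have hdisj : Disjoint S0 S1 := by
    rw [Set.disjoint_left]
    intro ω h0 h1
    exact absurd (h0.1.symm.trans h1.1) (by omega)
  have hS1m : MeasurableSet S1 :=
    ((zeroCount_measurable X hX (n + 1)) (measurableSet_singleton (a + 1))).inter
      ((zeroCount_measurable X hX n) (measurableSet_singleton a))
  have hmeas : μ D = μ S0 + μ S1 := by rw [← hunion, measure_union hdisj hS1m]
  have hDne : (μ D).toReal ≠ 0 := by
    have h1 := count_measure_ne_zero X μ hnd hn ha
    simp [hD, ENNReal.toReal_eq_zero_iff, h1, measure_ne_top μ D]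
  rw [condP, condP]
  rw [← add_div]
  rw [show (μ S0).toReal + (μ S1).toReal = (μ D).toReal by
    rw [hmeas, ENNReal.toReal_add (measure_ne_top μ _) (measure_ne_top μ _)]]
  exact div_self hDne

lemma inner_eq (n k z : ℕ) :
    ∑ m ∈ Finset.range 3,
        (-1 : ℝ) ^ m * (Nat.choose 2 m : ℝ) * condP X μ n 1 (m + z) (m + k) =
      condP X μ n 1 z k - 2 * condP X μ n 1 (z + 1) (k + 1) +
        condP X μ n 1 (z + 2) (k + 2) := by
  rw [Finset.sum_range_succ, Finset.sum_range_succ, Finset.sum_range_one]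
  simp only [Nat.zero_add, Nat.add_comm 1, Nat.add_comm 2]
  norm_num
  ring

end Helpers
/-- equivalence of (18) and (25). For a non-deterministic infinite
exchangeable `{0,1}`-valued sequence and `n ≥ 2`, the following are equivalent:
(i) for every `z = 0,…,n-1`,
`∑_{k=max(0,z-1)}^{min(z,n-2)} (-1)^k C(n-2,k) ∑_{m=0}^{2} (-1)^m C(2,m)
   P^n_{n+1}(0^{(m+z)} ∣ 0^{(m+k)}) = 0`;
(ii) for every `p = 0,…,n-2`,
`P^n_{n+1}(0^{(p+2)} ∣ 0^{(p+2)}) − 2 P^n_{n+1}(0^{(p+1)} ∣ 0^{(p+1)}) +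
   P^n_{n+1}(0^{(p)} ∣ 0^{(p)}) = 0`. -/
theorem u_eq_two_relation_iff_difference_relation
    {Ω : Type} [MeasurableSpace Ω] (μ : Measure Ω) [IsProbabilityMeasure μ]
    (X : ℕ → Ω → Bool) (hexch : Exchangeable X μ) (hnd : NonDeterministic X μ)
    (n : ℕ) (hn : 2 ≤ n) :
    (∀ z : ℕ, z ≤ n - 1 →
      ∑ k ∈ Finset.Icc (z - 1) (min z (n - 2)),
        (-1 : ℝ) ^ k * ((n - 2).choose k : ℝ) *
          ∑ m ∈ Finset.range 3,
            (-1 : ℝ) ^ m * (Nat.choose 2 m : ℝ) * condP X μ n 1 (m + z) (m + k) = 0) ↔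
    (∀ p : ℕ, p ≤ n - 2 →
      condP X μ n 1 (p + 2) (p + 2) - 2 * condP X μ n 1 (p + 1) (p + 1) +
        condP X μ n 1 p p = 0) := by
  have hX := hexch.1
  have key : ∀ a : ℕ, a ≤ n → condP X μ n 1 (a + 1) a = 1 - condP X μ n 1 a a := by
    intro a ha
    have := condP_diag_add X μ hX hnd (by omega : 1 ≤ n) ha
    linarith
  constructor
  · intro h p
    induction p using Nat.strong_induction_on with
    | _ p IH =>
      intro hp
      have hz := h p (by omega)
      rw [min_eq_left hp] at hz
      rcases Nat.eq_zero_or_pos p with rfl | hp1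
      · rw [show (0:ℕ) - 1 = 0 from rfl, Finset.Icc_self, Finset.sum_singleton,
          inner_eq] at hz
        simp only [pow_zero, Nat.choose_zero_right, Nat.cast_one, one_mul] at hz
        simp only [Nat.zero_add]
        linarith
      · obtain ⟨q, rfl⟩ : ∃ q, p = q + 1 := ⟨p - 1, by omega⟩
        rw [show q + 1 - 1 = q from rfl] at hz
        rw [Finset.sum_Icc_succ_top (by omega), Finset.Icc_self, Finset.sum_singleton] at hz
        rw [inner_eq, inner_eq] at hz
        have hkey0 := key q (by omega)
        have hkey1 := key (q + 1) (by omega)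
        have hkey2 := key (q + 2) (by omega)
        rw [show q + 1 + 2 = q + 2 + 1 from rfl] at hz
        rw [hkey0, hkey1, hkey2] at hz
        simp only [show q + 1 + 1 = q + 2 from rfl, show q + 2 + 1 = q + 3 from rfl,
          show q + 1 + 2 = q + 3 from rfl] at hz
        have hIH := IH q (by omega) (by omega)
        have hb1 : (1 - condP X μ n 1 q q - 2 * (1 - condP X μ n 1 (q + 1) (q + 1)) +
            (1 - condP X μ n 1 (q + 2) (q + 2))) = 0 := by linarith
        have hz2 : (-1 : ℝ) ^ (q + 1) * ((n - 2).choose (q + 1) : ℝ) *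
            (condP X μ n 1 (q + 1) (q + 1) - 2 * condP X μ n 1 (q + 2) (q + 2) +
              condP X μ n 1 (q + 3) (q + 3)) = 0 := by
          linear_combination hz - ((-1 : ℝ) ^ q * ((n - 2).choose q : ℝ)) * hb1
        have hne : (-1 : ℝ) ^ (q + 1) * ((n - 2).choose (q + 1) : ℝ) ≠ 0 :=
          mul_ne_zero (pow_ne_zero _ (by norm_num))
            (Nat.cast_ne_zero.2 (Nat.choose_pos hp).ne')
        have hfin := (mul_eq_zero.mp hz2).resolve_left hne
        simp only [show q + 1 + 1 = q + 2 from rfl, show q + 1 + 2 = q + 3 from rfl]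
        linarith
  · intro h z hz
    apply Finset.sum_eq_zero
    intro k hk
    rw [Finset.mem_Icc] at hk
    have hk2 : k ≤ n - 2 := le_trans hk.2 (min_le_right _ _)
    have hkz : k ≤ z := le_trans hk.2 (min_le_left _ _)
    have hzk : z = k ∨ z = k + 1 := by omega
    rw [inner_eq]
    have hdel := h k hk2
    rcases hzk with heq | heq
    · rw [heq]
      have hexpr : condP X μ n 1 k k - 2 * condP X μ n 1 (k + 1) (k + 1) +
          condP X μ n 1 (k + 2) (k + 2) = 0 := by linarith
      rw [hexpr, mul_zero]
    · rw [heq]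
      have hkey0 := key k (by omega)
      have hkey1 := key (k + 1) (by omega)
      have hkey2 := key (k + 2) (by omega)
      rw [show k + 1 + 2 = k + 2 + 1 from rfl, hkey0, hkey1, hkey2]
      have hexpr : 1 - condP X μ n 1 k k - 2 * (1 - condP X μ n 1 (k + 1) (k + 1)) +
          (1 - condP X μ n 1 (k + 2) (k + 2)) = 0 := by linarith
      rw [hexpr, mul_zero]

end HoeffdingUrn
end
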